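/- Let n ≥ 2 be an integer, R > 0, ε > 0, and L_f : [0,R] → ℝ given by L_f(s) := ∫₀^s t^{n−1} f(t) dt for f with r^{n−1} f ∈ L¹((0,R)). Then the boundary value problem −ε r^{n−1}·(r^{1−n} w'(r))' + w(r)ⁿ/(n r^{n(n−1)}) = L_f(r) on (0,R), with w(0) = 0, w'(0) = 0, and w'(R) = ε R^{n−1}, has at most one nonnegative classical solution w ∈ C²([0,R]). -/

import Mathlib

open MeasureTheory

/-- `L_f(s) := ∫₀^s t^{n−1} f(t) dt`. -/
noncomputable def Lf (n : ℕ) (f : ℝ → ℝ) (s : ℝ) : ℝ :=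
  ∫ t in (0:ℝ)..s, t ^ (n - 1) * f t

/-- A classical solution `w ∈ C²([0,R])` of the perturbed second-order problem
`−ε r^{1−n}·(r^{1−n} w')' + wⁿ/(n r^{n(n−1)}) = L_f` on (0,R), with
`w(0) = w'(0) = 0` and `w'(R) = ε R^{n−1}`. -/
def WSol (n : ℕ) (R ε : ℝ) (f w : ℝ → ℝ) : Prop :=
  ContDiffOn ℝ 2 w (Set.Icc 0 R) ∧
  (∀ r ∈ Set.Ioo 0 R,
    -ε * r ^ (n - 1) * deriv (fun s => (s ^ (n - 1) : ℝ)⁻¹ * deriv w s) r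
      + w r ^ n / ((n : ℝ) * r ^ (n * (n - 1))) = Lf n f r) ∧
  w 0 = 0 ∧ deriv w 0 = 0 ∧ deriv w R = ε * R ^ (n - 1)

open Set

lemma wsol_le_aux (n : ℕ) (hn : 2 ≤ n) (R ε : ℝ) (hR : 0 < R) (hε : 0 < ε)
    (f : ℝ → ℝ) (w₁ w₂ : ℝ → ℝ)
    (h1 : WSol n R ε f w₁) (h1nn : ∀ r ∈ Set.Icc 0 R, 0 ≤ w₁ r)
    (h2 : WSol n R ε f w₂) (h2nn : ∀ r ∈ Set.Icc 0 R, 0 ≤ w₂ r) :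
    ∀ r ∈ Set.Icc 0 R, w₁ r ≤ w₂ r := by
  by_contra hcon
  push_neg at hcon
  obtain ⟨c, hcmem, hvc⟩ := hcon
  obtain ⟨hC1, hE1, h01, hd01, hdR1⟩ := h1
  obtain ⟨hC2, hE2, h02, hd02, hdR2⟩ := h2
  have hU : UniqueDiffOn ℝ (Icc (0:ℝ) R) := uniqueDiffOn_Icc hR
  set v : ℝ → ℝ := fun r => w₁ r - w₂ r with hvdef
  have hvcont : ContinuousOn v (Icc 0 R) := hC1.continuousOn.sub hC2.continuousOn
  obtain ⟨r₀, hr₀mem, hmax⟩ :=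
    isCompact_Icc.exists_isMaxOn (nonempty_Icc.2 hR.le) hvcont
  have hvr₀ : 0 < v r₀ := lt_of_lt_of_le (sub_pos.2 hvc) (hmax hcmem)
  have hr₀pos : 0 < r₀ := by
    rcases hr₀mem.1.lt_or_eq with h | h
    · exact h
    · exfalso
      have : v r₀ = 0 := by simp [hvdef, ← h, h01, h02]
      linarith
  -- differentiability at R (from the nonzero boundary value of `deriv`)
  have hRpow : (0:ℝ) < ε * R ^ (n - 1) := by positivity
  have hdiffR : ∀ w : ℝ → ℝ, deriv w R = ε * R ^ (n - 1) → DifferentiableAt ℝ w R := by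
    intro w hw
    by_contra h
    rw [deriv_zero_of_not_differentiableAt h] at hw
    linarith
  -- interior differentiability facts
  have hIoo : ∀ w : ℝ → ℝ, ContDiffOn ℝ 2 w (Icc 0 R) → ∀ r ∈ Ioo (0:ℝ) R,
      DifferentiableAt ℝ w r ∧ DifferentiableAt ℝ (deriv w) r := by
    intro w hC r hr
    have hO : ContDiffOn ℝ 2 w (Ioo 0 R) := hC.mono Ioo_subset_Icc_self
    refine ⟨(hO.differentiableOn (by norm_num)).differentiableAt
      (isOpen_Ioo.mem_nhds hr), ?_⟩
    have h1' : ContDiffOn ℝ 1 (deriv w) (Ioo 0 R) :=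
      hO.deriv_of_isOpen isOpen_Ioo (by norm_num)
    exact (h1'.differentiableOn (by norm_num)).differentiableAt (isOpen_Ioo.mem_nhds hr)
  have hgdiff : ∀ w : ℝ → ℝ, ContDiffOn ℝ 2 w (Icc 0 R) → ∀ r ∈ Ioo (0:ℝ) R,
      DifferentiableAt ℝ (fun s => (s ^ (n - 1) : ℝ)⁻¹ * deriv w s) r := by
    intro w hC r hr
    have hp : DifferentiableAt ℝ (fun x : ℝ => x ^ (n - 1)) r := differentiableAt_pow _
    exact (hp.inv (pow_ne_zero _ hr.1.ne')).mul (hIoo w hC r hr).2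
  -- the comparison function built from `derivWithin` (continuous up to R)
  set G : (ℝ → ℝ) → ℝ → ℝ :=
    fun w s => (s ^ (n - 1) : ℝ)⁻¹ * derivWithin w (Icc 0 R) s with hGdef
  set D : ℝ → ℝ := fun s => G w₁ s - G w₂ s with hDdef
  have hGeq : ∀ w : ℝ → ℝ, ∀ r ∈ Ioo (0:ℝ) R,
      G w r = (r ^ (n - 1) : ℝ)⁻¹ * deriv w r := by
    intro w r hr
    simp only [hGdef, derivWithin_of_mem_nhds (Icc_mem_nhds hr.1 hr.2)]
  have hGcont : ∀ w : ℝ → ℝ, ContDiffOn ℝ 2 w (Icc 0 R) →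
      ContinuousOn (G w) (Ioc 0 R) := by
    intro w hC
    apply ContinuousOn.mul
    · exact ((continuous_pow (n - 1)).continuousOn).inv₀
        fun x hx => pow_ne_zero _ (ne_of_gt hx.1)
    · exact (hC.continuousOn_derivWithin hU (by norm_num)).mono Ioc_subset_Icc_self
  have hDcont : ContinuousOn D (Ioc 0 R) := (hGcont w₁ hC1).sub (hGcont w₂ hC2)
  -- D r₀ = 0
  have hDr₀ : D r₀ = 0 := by
    rcases hr₀mem.2.lt_or_eq with hlt | heq
    · -- interior maximum : deriv v r₀ = 0
      have hr₀Ioo : r₀ ∈ Ioo (0:ℝ) R := ⟨hr₀pos, hlt⟩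
      have hloc : IsLocalMax v r₀ := hmax.isLocalMax (Icc_mem_nhds hr₀pos hlt)
      have hder0 : deriv v r₀ = 0 := hloc.deriv_eq_zero
      have hderv : deriv v r₀ = deriv w₁ r₀ - deriv w₂ r₀ :=
        deriv_sub (hIoo w₁ hC1 r₀ hr₀Ioo).1 (hIoo w₂ hC2 r₀ hr₀Ioo).1
      have : deriv w₁ r₀ = deriv w₂ r₀ := by linarith [hderv ▸ hder0]
      rw [hDdef]
      simp only [hGeq w₁ r₀ hr₀Ioo, hGeq w₂ r₀ hr₀Ioo, this, sub_self]
    · -- boundary maximum at R : use the boundary condition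
      have hd1 : derivWithin w₁ (Icc 0 R) R = deriv w₁ R :=
        (hdiffR w₁ hdR1).derivWithin (hU R (right_mem_Icc.2 hR.le))
      have hd2 : derivWithin w₂ (Icc 0 R) R = deriv w₂ R :=
        (hdiffR w₂ hdR2).derivWithin (hU R (right_mem_Icc.2 hR.le))
      rw [hDdef]
      simp only [hGdef, heq, hd1, hd2, hdR1, hdR2, sub_self]
  -- positivity window to the left of r₀
  have hev : {x | 0 < v x} ∈ nhdsWithin r₀ (Icc 0 R) :=
    (hvcont r₀ hr₀mem).eventually (eventually_gt_nhds hvr₀)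
  obtain ⟨δ, hδpos, hball⟩ := Metric.mem_nhdsWithin_iff.1 hev
  set a : ℝ := max (r₀ - δ / 2) (r₀ / 2) with hadef
  have ha0 : 0 < a := lt_of_lt_of_le (half_pos hr₀pos) (le_max_right _ _)
  have har : a < r₀ := max_lt (by linarith) (by linarith)
  have hsub : Icc a r₀ ⊆ Icc 0 R :=
    fun x hx => ⟨le_trans ha0.le hx.1, le_trans hx.2 hr₀mem.2⟩
  have hpos : ∀ x ∈ Icc a r₀, 0 < v x := by
    intro x hx
    apply hball
    refine ⟨?_, hsub hx⟩
    have h1 : r₀ - δ / 2 ≤ x := le_trans (le_max_left _ _) hx.1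
    have : dist x r₀ < δ := by
      rw [Real.dist_eq, abs_lt]; constructor <;> linarith [hx.2]
    exact this
  have hsubIoc : Icc a r₀ ⊆ Ioc 0 R :=
    fun x hx => ⟨lt_of_lt_of_le ha0 hx.1, le_trans hx.2 hr₀mem.2⟩
  -- deriv D is positive on the interior of the window
  have hDderiv : ∀ s ∈ Ioo a r₀, 0 < deriv D s := by
    intro s hs
    have hsIoo : s ∈ Ioo (0:ℝ) R :=
      ⟨lt_of_lt_of_le ha0 hs.1.le, lt_of_lt_of_le hs.2 hr₀mem.2⟩
    -- rewrite deriv D as difference of the two `deriv g` values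
    have heqn : EqOn D (fun x => ((x ^ (n - 1) : ℝ)⁻¹ * deriv w₁ x)
        - ((x ^ (n - 1) : ℝ)⁻¹ * deriv w₂ x)) (Ioo 0 R) := by
      intro x hx
      simp only [hDdef, hGeq w₁ x hx, hGeq w₂ x hx]
    have hEE : D =ᶠ[nhds s] fun x => ((x ^ (n - 1) : ℝ)⁻¹ * deriv w₁ x)
        - ((x ^ (n - 1) : ℝ)⁻¹ * deriv w₂ x) :=
      Filter.eventuallyEq_of_mem (isOpen_Ioo.mem_nhds hsIoo) heqn
    have hderD : deriv D s =
        deriv (fun x => (x ^ (n - 1) : ℝ)⁻¹ * deriv w₁ x) s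
          - deriv (fun x => (x ^ (n - 1) : ℝ)⁻¹ * deriv w₂ x) s := by
      rw [hEE.deriv_eq]
      exact deriv_sub (hgdiff w₁ hC1 s hsIoo) (hgdiff w₂ hC2 s hsIoo)
    -- use the two equations
    have he1 := hE1 s hsIoo
    have he2 := hE2 s hsIoo
    set d₁ := deriv (fun x => (x ^ (n - 1) : ℝ)⁻¹ * deriv w₁ x) s with hd₁
    set d₂ := deriv (fun x => (x ^ (n - 1) : ℝ)⁻¹ * deriv w₂ x) s with hd₂
    have hXpos : (0:ℝ) < ε * s ^ (n - 1) := mul_pos hε (pow_pos hsIoo.1 _)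
    have hden : (0:ℝ) < (n : ℝ) * s ^ (n * (n - 1)) := by
      have hn0 : (0:ℝ) < (n:ℝ) := by exact_mod_cast lt_of_lt_of_le (by norm_num) hn
      exact mul_pos hn0 (pow_pos hsIoo.1 _)
    have hvspos : 0 < v s := hpos s ⟨hs.1.le, hs.2.le⟩
    have hwlt : w₂ s < w₁ s := sub_pos.1 hvspos
    have hw2nn : 0 ≤ w₂ s := h2nn s (hsubIoc.trans Ioc_subset_Icc_self ⟨hs.1.le, hs.2.le⟩)
    have hplt : w₂ s ^ n < w₁ s ^ n :=
      pow_lt_pow_left₀ hwlt hw2nn (by omega)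
    have hQ : 0 < w₁ s ^ n / ((n : ℝ) * s ^ (n * (n - 1)))
        - w₂ s ^ n / ((n : ℝ) * s ^ (n * (n - 1))) := by
      rw [div_sub_div_same]
      exact div_pos (sub_pos.2 hplt) hden
    rw [hderD]
    nlinarith [he1, he2, hXpos, hQ]
  -- D is strictly increasing on [a, r₀], hence negative before r₀
  have hDmono : StrictMonoOn D (Icc a r₀) := by
    apply strictMonoOn_of_deriv_pos (convex_Icc a r₀) (hDcont.mono hsubIoc)
    intro x hx
    rw [interior_Icc] at hx
    exact hDderiv x hx
  -- v is strictly decreasing on [a, r₀]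
  have hvderiv : ∀ s ∈ Ioo a r₀, deriv v s < 0 := by
    intro s hs
    have hsIoo : s ∈ Ioo (0:ℝ) R :=
      ⟨lt_of_lt_of_le ha0 hs.1.le, lt_of_lt_of_le hs.2 hr₀mem.2⟩
    have hDneg : D s < 0 := by
      have := hDmono ⟨hs.1.le, hs.2.le⟩ (right_mem_Icc.2 (le_of_lt har)) hs.2
      rw [hDr₀] at this; exact this
    have hspow : (0:ℝ) < s ^ (n - 1) := pow_pos hsIoo.1 _
    have hDs : D s = (s ^ (n - 1) : ℝ)⁻¹ * (deriv w₁ s - deriv w₂ s) := by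
      simp only [hDdef, hGeq w₁ s hsIoo, hGeq w₂ s hsIoo]; ring
    have hsign : deriv w₁ s - deriv w₂ s < 0 := by
      by_contra hcontra
      push_neg at hcontra
      have : 0 ≤ D s := by
        rw [hDs]; exact mul_nonneg (inv_nonneg.2 hspow.le) hcontra
      linarith
    have : deriv v s = deriv w₁ s - deriv w₂ s :=
      deriv_sub (hIoo w₁ hC1 s hsIoo).1 (hIoo w₂ hC2 s hsIoo).1
    linarith [this ▸ hsign]
  have hvanti : StrictAntiOn v (Icc a r₀) := by
    apply strictAntiOn_of_deriv_neg (convex_Icc a r₀) (hvcont.mono hsub)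
    intro x hx
    rw [interior_Icc] at hx
    exact hvderiv x hx
  have hva : v r₀ < v a :=
    hvanti (left_mem_Icc.2 har.le) (right_mem_Icc.2 har.le) har
  have : v a ≤ v r₀ := hmax (hsub (left_mem_Icc.2 har.le))
  linarith

/-- the perturbed second-order boundary value problem has at most one
nonnegative classical solution. -/
theorem stmt_3 (n : ℕ) (hn : 2 ≤ n) (R ε : ℝ) (hR : 0 < R) (hε : 0 < ε)
    (f : ℝ → ℝ)
    (hfint : IntegrableOn (fun t => t ^ (n - 1) * f t) (Set.Ioo 0 R))
    (w₁ w₂ : ℝ → ℝ)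
    (h1 : WSol n R ε f w₁) (h1nn : ∀ r ∈ Set.Icc 0 R, 0 ≤ w₁ r)
    (h2 : WSol n R ε f w₂) (h2nn : ∀ r ∈ Set.Icc 0 R, 0 ≤ w₂ r) :
    Set.EqOn w₁ w₂ (Set.Icc 0 R) := by
  intro r hr
  exact le_antisymm
    (wsol_le_aux n hn R ε hR hε f w₁ w₂ h1 h1nn h2 h2nn r hr)
    (wsol_le_aux n hn R ε hR hε f w₂ w₁ h2 h2nn h1 h1nn r hr)
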